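/- Let κ ≥ 0 and ĉ_a, c_c > 0 be constants, let r_a be an accuracy rate and r_c a cost rate, and assume that ĉ_a·r_a''(n) + c_c·r_c''(n) > 0 for all n ∈ (0, ∞). Suppose there exists n̄ ∈ (0, ∞) such that ĉ_a·r_a'(n̄) + c_c·r_c'(n̄) = 0. Then for every budget P > 2, any global minimizer n* on [1, P−1] of the function u(n) = (κ + ĉ_a·r_a(n) + c_c·r_c(n))/(P − n) satisfies n* ≤ max{1, n̄}; in particular the minimizer is bounded from above independently of the budget P. (This is the induction step of Proposition 3.5.) -/

import Mathlib

open Set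

/-- Proposition 3.5 (induction step): any global minimizer of the iteration objective
`u(n) = (κ + ĉₐ·rₐ(n) + c_c·r_c(n))/(P − n)` on `[1, P−1]` is bounded above by `max 1 n̄`,
independently of the budget `P`. -/
theorem stmt_4
    (κ ca cc : ℝ) (ra rc : ℝ → ℝ) (nbar : ℝ)
    (hκ : 0 ≤ κ) (hca : 0 < ca) (hcc : 0 < cc)
    -- `ra` is an accuracy rate: positive, decreasing, twice continuously differentiable on `(0, ∞)`
    (hra_pos : ∀ x ∈ Ioi (0 : ℝ), 0 < ra x)
    (hra_anti : StrictAntiOn ra (Ioi 0))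
    (hra_smooth : ContDiffOn ℝ 2 ra (Ioi 0))
    -- `rc` is a cost rate: positive, increasing, twice continuously differentiable on `(0, ∞)`
    (hrc_pos : ∀ x ∈ Ioi (0 : ℝ), 0 < rc x)
    (hrc_mono : StrictMonoOn rc (Ioi 0))
    (hrc_smooth : ContDiffOn ℝ 2 rc (Ioi 0))
    -- strict convexity on all of `(0, ∞)`
    (hconv : ∀ n ∈ Ioi (0 : ℝ),
      0 < ca * deriv (deriv ra) n + cc * deriv (deriv rc) n)
    -- existence of a stationary point `n̄` of the numerator
    (hnbar : nbar ∈ Ioi (0 : ℝ))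
    (hstat : ca * deriv ra nbar + cc * deriv rc nbar = 0) :
    ∀ P : ℝ, 2 < P → ∀ nstar ∈ Icc (1 : ℝ) (P - 1),
      (∀ n ∈ Icc (1 : ℝ) (P - 1),
        (κ + ca * ra nstar + cc * rc nstar) / (P - nstar) ≤
          (κ + ca * ra n + cc * rc n) / (P - n)) →
      nstar ≤ max 1 nbar := by

  intro P hP nstar hstar hmin
  by_contra hcon
  push_neg at hcon
  set m := max 1 nbar with hm
  have hnbar0 : (0:ℝ) < nbar := hnbar
  have hm1 : (1:ℝ) ≤ m := le_max_left _ _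
  have hm_pos : (0:ℝ) < m := lt_of_lt_of_le one_pos hm1
  -- first derivatives
  have hdra : ∀ x ∈ Ioi (0:ℝ), DifferentiableAt ℝ ra x := fun x hx =>
    (hra_smooth.differentiableOn (by norm_num)).differentiableAt (isOpen_Ioi.mem_nhds hx)
  have hdrc : ∀ x ∈ Ioi (0:ℝ), DifferentiableAt ℝ rc x := fun x hx =>
    (hrc_smooth.differentiableOn (by norm_num)).differentiableAt (isOpen_Ioi.mem_nhds hx)
  -- second derivatives
  have hdra2 : ∀ x ∈ Ioi (0:ℝ), DifferentiableAt ℝ (deriv ra) x := by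
    intro x hx
    have h2 : ContDiffOn ℝ ((1:ℕ) + 1) ra (Ioi 0) := by exact_mod_cast hra_smooth
    exact (((contDiffOn_succ_iff_deriv_of_isOpen isOpen_Ioi).mp h2).2.2.differentiableOn
      (by norm_num)).differentiableAt (isOpen_Ioi.mem_nhds hx)
  have hdrc2 : ∀ x ∈ Ioi (0:ℝ), DifferentiableAt ℝ (deriv rc) x := by
    intro x hx
    have h2 : ContDiffOn ℝ ((1:ℕ) + 1) rc (Ioi 0) := by exact_mod_cast hrc_smooth
    exact (((contDiffOn_succ_iff_deriv_of_isOpen isOpen_Ioi).mp h2).2.2.differentiableOn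
      (by norm_num)).differentiableAt (isOpen_Ioi.mem_nhds hx)
  set f : ℝ → ℝ := fun n => ca * ra n + cc * rc n with hf
  set g : ℝ → ℝ := fun n => ca * deriv ra n + cc * deriv rc n with hg
  have hf_diff : ∀ x ∈ Ioi (0:ℝ), DifferentiableAt ℝ f x := fun x hx =>
    (((hdra x hx).const_mul ca).add ((hdrc x hx).const_mul cc))
  have hf_deriv : ∀ x ∈ Ioi (0:ℝ), deriv f x = g x := by
    intro x hx
    have := (((hdra x hx).hasDerivAt.const_mul ca).add
      ((hdrc x hx).hasDerivAt.const_mul cc)).deriv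
    simpa [hf, hg, Pi.add_def] using this
  have hg_diff : ∀ x ∈ Ioi (0:ℝ), DifferentiableAt ℝ g x := fun x hx =>
    ((hdra2 x hx).const_mul ca).add ((hdrc2 x hx).const_mul cc)
  have hg_deriv : ∀ x ∈ Ioi (0:ℝ),
      deriv g x = ca * deriv (deriv ra) x + cc * deriv (deriv rc) x := by
    intro x hx
    have := (((hdra2 x hx).hasDerivAt.const_mul ca).add
      ((hdrc2 x hx).hasDerivAt.const_mul cc)).deriv
    simpa [hg, Pi.add_def] using this
  -- g is strictly increasing on (0, ∞)
  have hg_mono : StrictMonoOn g (Ioi 0) := by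
    apply strictMonoOn_of_deriv_pos (convex_Ioi 0)
    · exact fun x hx => (hg_diff x hx).continuousAt.continuousWithinAt
    · intro x hx
      rw [interior_Ioi] at hx
      rw [hg_deriv x hx]
      exact hconv x hx
  have hg_nbar : g nbar = 0 := hstat
  -- f is strictly increasing on [nbar, ∞)
  have hIci : Ici nbar ⊆ Ioi (0:ℝ) := fun x hx => lt_of_lt_of_le hnbar0 hx
  have hf_mono : StrictMonoOn f (Ici nbar) := by
    apply strictMonoOn_of_deriv_pos (convex_Ici nbar)
    · exact fun x hx => ((hf_diff x (hIci hx)).continuousAt).continuousWithinAt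
    · intro x hx
      rw [interior_Ici] at hx
      have hx0 : x ∈ Ioi (0:ℝ) := lt_trans hnbar0 hx
      rw [hf_deriv x hx0, ← hg_nbar]
      exact hg_mono hnbar hx0 hx
  -- positions
  have hmn : m < nstar := hcon
  have hnstar_le : nstar ≤ P - 1 := hstar.2
  have hm_mem : m ∈ Icc (1:ℝ) (P - 1) := ⟨hm1, le_of_lt (lt_of_lt_of_le hmn hnstar_le)⟩
  have key := hmin m hm_mem
  have hnstar_pos : (0:ℝ) < nstar := lt_of_lt_of_le one_pos hstar.1
  have hfm_lt : f m < f nstar :=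
    hf_mono (le_max_right 1 nbar) (le_trans (le_max_right 1 nbar) (le_of_lt hmn)) hmn
  have hden1 : (0:ℝ) < P - nstar := by linarith
  have hden2 : (0:ℝ) < P - m := by linarith
  have hnum_pos : (0:ℝ) < κ + f nstar := by
    have h1 := hra_pos nstar hnstar_pos
    have h2 := hrc_pos nstar hnstar_pos
    have : 0 < f nstar := by positivity
    linarith
  have hnum_m : (0:ℝ) ≤ κ + f m := by
    have h1 := hra_pos m hm_pos
    have h2 := hrc_pos m hm_pos
    have : 0 < f m := by positivity
    linarith
  have hlt : (κ + f m) / (P - m) < (κ + f nstar) / (P - nstar) := by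
    calc (κ + f m) / (P - m) ≤ (κ + f m) / (P - nstar) := by
            apply div_le_div_of_nonneg_left hnum_m hden1 <;> linarith
      _ < (κ + f nstar) / (P - nstar) := by
            gcongr
  have : (κ + f nstar) / (P - nstar) ≤ (κ + f m) / (P - m) := by
    simpa [hf, add_assoc] using key
  linarith
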